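/- Let f : ℂ → ℂ be any map, let ω ∈ ℂ with ω ≠ 1, and suppose f(ω·w) = ω·f(w) for all w ∈ ℂ. Let q ∈ (0,1), let w(n,k) = Γ(n−k+q)/(Γ(q)·Γ(n−k+1)) for 1 ≤ k ≤ n (Γ the real Gamma function), and let z₀ ∈ ℂ with z₀ ≠ 0. For a sequence z : ℕ → ℂ and n ≥ 1, define Φ_n(z) = z₀ + Σ_{k=1}^{n} w(n,k)·f(z(k−1)). Then for every sequence z : ℕ → ℂ and every n ≥ 1, Φ_n(ω·z) − ω·Φ_n(z) = (1 − ω)·z₀ ≠ 0; that is, the Caputo fractional-order variant of any rotation-equivariant map fails rotation equivariance whenever z₀ ≠ 0. -/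
import Mathlib


open Complex ComplexConjugate Finset

/-- The Caputo fractional-order variant of any `ω`-rotation-equivariant map
(`ω ≠ 1`) fails rotation equivariance whenever `z₀ ≠ 0`:
`Φ_n(ω·z) - ω·Φ_n(z) = (1 - ω)·z₀ ≠ 0`. -/
theorem fo_rotation_equivariance_broken
    (f : ℂ → ℂ) (ω : ℂ) (hω : ω ≠ 1) (hf : ∀ z : ℂ, f (ω * z) = ω * f z)
    (q : ℝ) (hq : q ∈ Set.Ioo (0 : ℝ) 1)
    (w : ℕ → ℕ → ℝ)
    (hw : ∀ n k : ℕ, 1 ≤ k → k ≤ n →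
      w n k = Real.Gamma (((n - k : ℕ) : ℝ) + q) /
        (Real.Gamma q * Real.Gamma (((n - k : ℕ) : ℝ) + 1)))
    (z₀ : ℂ) (hz₀ : z₀ ≠ 0)
    (Φ : ℕ → (ℕ → ℂ) → ℂ)
    (hΦ : ∀ (n : ℕ) (z : ℕ → ℂ),
      Φ n z = z₀ + ∑ k ∈ Finset.Icc 1 n, (w n k : ℂ) * f (z (k - 1))) :
    ∀ (z : ℕ → ℂ) (n : ℕ), 1 ≤ n →
      Φ n (fun k => ω * z k) - ω * Φ n z = (1 - ω) * z₀ ∧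
      (1 - ω) * z₀ ≠ 0 := by
  intro z n hn
  constructor
  · rw [hΦ, hΦ]
    simp only [hf]
    rw [mul_add, Finset.mul_sum]
    have : ∀ x ∈ Finset.Icc 1 n, (w n x : ℂ) * (ω * f (z (x - 1))) = ω * ((w n x : ℂ) * f (z (x - 1))) := fun x _ => by ring
    rw [Finset.sum_congr rfl this]
    ring
  · intro h
    rcases mul_eq_zero.1 h with h1 | h1
    · exact hω (by linear_combination -h1)
    · exact hz₀ h1
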